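/- Let A : ℝ → ℝ^{n×n} be continuous and let Φ(t) be the solution of Φ' = A(t)Φ, Φ(0) = e₀. Suppose there are constants k ≥ 1, λ > 0 with |Φ(t)| ≤ k e^{-λt}|e₀| for all solutions and all t ≥ 0, and |A(t)| ≤ μ for all t. Then for every symmetric positive definite Q, the matrix P = ∫₀^∞ M(s)ᵀ Q M(s) ds, where M(s) is the fundamental matrix solution (M' = A M, M(0) = I), is well-defined, symmetric, and satisfies (λ_min(Q)/(2μ))·I ≤ P ≤ (k²λ_max(Q)/(2λ))·I. -/

import Mathlib

open MeasureTheory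

lemma aux_exp_int {b : ℝ} (hb : 0 < b) :
    ∫ x in Set.Ioi (0:ℝ), Real.exp (-b * x) = 1 / b := by
  have hderiv : ∀ x ∈ Set.Ici (0:ℝ),
      HasDerivAt (fun x => -(1/b) * Real.exp (-b * x)) (Real.exp (-b * x)) x := by
    intro x _
    have h1 : HasDerivAt (fun x : ℝ => -b * x) (-b) x := by
      simpa using (hasDerivAt_id x).const_mul (-b)
    have h2 := (Real.hasDerivAt_exp (-b * x)).comp x h1
    have h3 := h2.const_mul (-(1/b))
    convert h3 using 1
    all_goals first | rfl | field_simp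
  have hint : IntegrableOn (fun x => Real.exp (-b * x)) (Set.Ioi 0) :=
    exp_neg_integrableOn_Ioi 0 hb
  have htend : Filter.Tendsto (fun x => -(1/b) * Real.exp (-b * x)) Filter.atTop (nhds 0) := by
    have : Filter.Tendsto (fun x : ℝ => -b * x) Filter.atTop Filter.atBot := by
      simpa using (Filter.tendsto_id (α := ℝ)).const_mul_atTop_of_neg (neg_neg_iff_pos.2 hb)
    have := (Real.tendsto_exp_atBot).comp this
    simpa using this.const_mul (-(1/b))
  have := integral_Ioi_of_hasDerivAt_of_tendsto' hderiv hint htend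
  rw [this]
  simp


lemma aux_gronwall_low {n : ℕ} (μ : ℝ)
    (A M : ℝ → EuclideanSpace ℝ (Fin n) →L[ℝ] EuclideanSpace ℝ (Fin n))
    (hAb : ∀ t ≥ (0:ℝ), ‖A t‖ ≤ μ)
    (hM0 : M 0 = ContinuousLinearMap.id ℝ (EuclideanSpace ℝ (Fin n)))
    (hM : ∀ t, HasDerivAt M ((A t).comp (M t)) t)
    (v : EuclideanSpace ℝ (Fin n)) :
    ∀ s ≥ (0:ℝ), Real.exp (-(2*μ) * s) * ‖v‖ ^ 2 ≤ ‖M s v‖ ^ 2 := by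
  have hy : ∀ s : ℝ, HasDerivAt (fun s => M s v) (A s (M s v)) s := by
    intro s
    have := (hM s).clm_apply (hasDerivAt_const s v)
    simpa using this
  set h : ℝ → ℝ := fun s => (inner ℝ (M s v) (M s v) : ℝ) * Real.exp (2*μ*s) with hh_def
  have hexp : ∀ s : ℝ, HasDerivAt (fun s => Real.exp (2*μ*s)) (2*μ*Real.exp (2*μ*s)) s := by
    intro s
    have h1 : HasDerivAt (fun s : ℝ => 2*μ*s) (2*μ) s := by
      simpa using (hasDerivAt_id s).const_mul (2*μ)
    have h2 := (Real.hasDerivAt_exp (2*μ*s)).comp s h1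
    have h3 : Real.exp ∘ (fun s : ℝ => 2*μ*s) = fun s : ℝ => Real.exp (2*μ*s) := rfl
    rw [h3] at h2
    convert h2 using 1
    all_goals first | rfl | ring
  have hhd : ∀ s : ℝ, HasDerivAt h
      (((inner ℝ (M s v) (A s (M s v)) : ℝ) + (inner ℝ (A s (M s v)) (M s v) : ℝ))
          * Real.exp (2*μ*s)
        + (inner ℝ (M s v) (M s v) : ℝ) * (2*μ*Real.exp (2*μ*s))) s := by
    intro s
    exact (HasDerivAt.inner ℝ (hy s) (hy s)).mul (hexp s)
  have hmono : MonotoneOn h (Set.Ici 0) := by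
    apply monotoneOn_of_deriv_nonneg (convex_Ici 0)
    · exact fun s _ => ((hhd s).continuousAt).continuousWithinAt
    · intro s _
      exact ((hhd s).differentiableAt).differentiableWithinAt
    · intro s hs
      rw [interior_Ici] at hs
      rw [(hhd s).deriv]
      have hs0 : (0:ℝ) ≤ s := le_of_lt hs
      have hAn : ‖A s (M s v)‖ ≤ μ * ‖M s v‖ := by
        calc ‖A s (M s v)‖ ≤ ‖A s‖ * ‖M s v‖ := (A s).le_opNorm _
        _ ≤ μ * ‖M s v‖ := by
            have := hAb s hs0
            nlinarith [norm_nonneg (M s v)]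
      have hcs : -(μ * ‖M s v‖ * ‖M s v‖) ≤ (inner ℝ (A s (M s v)) (M s v) : ℝ) := by
        have := abs_real_inner_le_norm (A s (M s v)) (M s v)
        have h2 : ‖A s (M s v)‖ * ‖M s v‖ ≤ μ * ‖M s v‖ * ‖M s v‖ := by
          nlinarith [norm_nonneg (M s v)]
        nlinarith [neg_abs_le (inner ℝ (A s (M s v)) (M s v) : ℝ)]
      have hself : (inner ℝ (M s v) (M s v) : ℝ) = ‖M s v‖ ^ 2 := real_inner_self_eq_norm_sq _
      have hcomm : (inner ℝ (M s v) (A s (M s v)) : ℝ) = (inner ℝ (A s (M s v)) (M s v) : ℝ) :=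
        real_inner_comm _ _
      have hexpos : 0 < Real.exp (2*μ*s) := Real.exp_pos _
      rw [hcomm, hself]
      nlinarith
  intro s hs
  have := hmono (Set.self_mem_Ici) hs hs
  have h0 : h 0 = ‖v‖ ^ 2 := by
    simp only [hh_def, hM0, ContinuousLinearMap.id_apply, mul_zero, Real.exp_zero, mul_one,
      real_inner_self_eq_norm_sq]
  rw [h0] at this
  have hself : (inner ℝ (M s v) (M s v) : ℝ) = ‖M s v‖ ^ 2 := real_inner_self_eq_norm_sq _
  rw [hh_def] at this
  simp only [hself] at this
  have hexpos : 0 < Real.exp (2*μ*s) := Real.exp_pos _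
  have hneg : Real.exp (-(2*μ) * s) = (Real.exp (2*μ*s))⁻¹ := by
    rw [← Real.exp_neg]; ring_nf
  rw [hneg]
  rw [inv_mul_le_iff₀ hexpos]
  nlinarith

/-- If the fundamental matrix `M` of `x' = A(t)x` decays like `k e^{-λ t}` and `‖A t‖ ≤ μ`, then
for any symmetric positive definite `Q`, `P = ∫₀^∞ M(s)ᵀ Q M(s) ds` is well defined, symmetric and
satisfies `(λ_min(Q)/(2μ)) I ≤ P ≤ (k² λ_max(Q)/(2λ)) I`. -/
theorem stmt4 {n : ℕ} (μ k lam : ℝ) (hμ : 0 < μ) (hk : 1 ≤ k) (hlam : 0 < lam)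
    (A M : ℝ → EuclideanSpace ℝ (Fin n) →L[ℝ] EuclideanSpace ℝ (Fin n))
    (hA : Continuous A) (hAb : ∀ t ≥ (0:ℝ), ‖A t‖ ≤ μ)
    (hM0 : M 0 = ContinuousLinearMap.id ℝ (EuclideanSpace ℝ (Fin n)))
    (hM : ∀ t, HasDerivAt M ((A t).comp (M t)) t)
    (hMb : ∀ t ≥ (0:ℝ), ‖M t‖ ≤ k * Real.exp (-lam * t))
    (Q : EuclideanSpace ℝ (Fin n) →L[ℝ] EuclideanSpace ℝ (Fin n))
    (hQsym : ∀ u v, (inner ℝ (Q u) v : ℝ) = (inner ℝ u (Q v) : ℝ))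
    (qlo qhi : ℝ) (hqlo : 0 < qlo)
    (hQlow : ∀ v, qlo * ‖v‖ ^ 2 ≤ (inner ℝ v (Q v) : ℝ))
    (hQhigh : ∀ v, (inner ℝ v (Q v) : ℝ) ≤ qhi * ‖v‖ ^ 2) :
    IntegrableOn (fun s => (ContinuousLinearMap.adjoint (M s)).comp (Q.comp (M s)))
        (Set.Ioi (0:ℝ)) ∧
      ∀ P : EuclideanSpace ℝ (Fin n) →L[ℝ] EuclideanSpace ℝ (Fin n),
        P = (∫ s in Set.Ioi (0:ℝ), (ContinuousLinearMap.adjoint (M s)).comp (Q.comp (M s))) →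
        (∀ u v, (inner ℝ (P u) v : ℝ) = (inner ℝ u (P v) : ℝ)) ∧
        (∀ v, qlo / (2 * μ) * ‖v‖ ^ 2 ≤ (inner ℝ v (P v) : ℝ)) ∧
        (∀ v, (inner ℝ v (P v) : ℝ) ≤ k ^ 2 * qhi / (2 * lam) * ‖v‖ ^ 2) := by
  set f : ℝ → EuclideanSpace ℝ (Fin n) →L[ℝ] EuclideanSpace ℝ (Fin n) :=
    fun s => (ContinuousLinearMap.adjoint (M s)).comp (Q.comp (M s)) with hf_def
  have hMcont : Continuous M := continuous_iff_continuousAt.2 fun t => (hM t).continuousAt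
  have hfc : Continuous f := by
    apply Continuous.clm_comp
    · exact (ContinuousLinearMap.adjoint (𝕜 := ℝ)).continuous.comp hMcont
    · exact continuous_const.clm_comp hMcont
  have hadjn : ∀ s, ‖ContinuousLinearMap.adjoint (M s)‖ = ‖M s‖ := fun s =>
    (ContinuousLinearMap.adjoint (𝕜 := ℝ)).norm_map (M s)
  have hfbound : ∀ s ∈ Set.Ioi (0:ℝ), ‖f s‖ ≤ ‖Q‖ * k^2 * Real.exp (-(2*lam) * s) := by
    intro s hs
    have hs0 : (0:ℝ) ≤ s := le_of_lt hs
    have hMs := hMb s hs0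
    have hMn : (0:ℝ) ≤ ‖M s‖ := norm_nonneg _
    have hQn : (0:ℝ) ≤ ‖Q‖ := norm_nonneg _
    have h1 : ‖f s‖ ≤ ‖M s‖ * (‖Q‖ * ‖M s‖) := by
      calc ‖f s‖ ≤ ‖ContinuousLinearMap.adjoint (M s)‖ * ‖Q.comp (M s)‖ :=
            ContinuousLinearMap.opNorm_comp_le _ _
        _ ≤ ‖M s‖ * (‖Q‖ * ‖M s‖) := by
            rw [hadjn]
            exact mul_le_mul_of_nonneg_left (ContinuousLinearMap.opNorm_comp_le _ _) hMn
    have hexp : Real.exp (-lam * s) * Real.exp (-lam * s) = Real.exp (-(2*lam) * s) := by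
      rw [← Real.exp_add]; ring_nf
    calc ‖f s‖ ≤ ‖M s‖ * (‖Q‖ * ‖M s‖) := h1
      _ ≤ (k * Real.exp (-lam * s)) * (‖Q‖ * (k * Real.exp (-lam * s))) := by
          apply mul_le_mul hMs _ (by positivity) (by nlinarith [Real.exp_pos (-lam * s)])
          exact mul_le_mul_of_nonneg_left hMs hQn
      _ = ‖Q‖ * k^2 * Real.exp (-(2*lam) * s) := by rw [← hexp]; ring
  have hgint : IntegrableOn (fun s => Real.exp (-(2*lam) * s)) (Set.Ioi (0:ℝ)) :=
    exp_neg_integrableOn_Ioi 0 (by positivity)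
  have hint : IntegrableOn f (Set.Ioi (0:ℝ)) := by
    apply Integrable.mono' (hgint.const_mul (‖Q‖ * k^2))
    · exact hfc.aestronglyMeasurable.restrict
    · filter_upwards [ae_restrict_mem measurableSet_Ioi] with s hs
      exact hfbound s hs
  refine ⟨hint, fun P hP => ?_⟩
  -- pointwise quadratic form
  have happly : ∀ v, P v = ∫ s in Set.Ioi (0:ℝ), f s v := by
    intro v; rw [hP]; exact ContinuousLinearMap.integral_apply hint v
  have hintv : ∀ v : EuclideanSpace ℝ (Fin n),
      Integrable (fun s => f s v) (volume.restrict (Set.Ioi (0:ℝ))) :=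
    fun v => hint.apply_continuousLinearMap v
  have hkey : ∀ u v, (inner ℝ u (P v) : ℝ)
      = ∫ s in Set.Ioi (0:ℝ), (inner ℝ (M s u) (Q (M s v)) : ℝ) := by
    intro u v
    rw [happly v, ← integral_inner (hintv v) u]
    apply setIntegral_congr_fun measurableSet_Ioi
    intro s _
    simp only [hf_def, ContinuousLinearMap.comp_apply]
    rw [ContinuousLinearMap.adjoint_inner_right]
  have hφint : ∀ u v, IntegrableOn (fun s => (inner ℝ (M s u) (Q (M s v)) : ℝ))
      (Set.Ioi (0:ℝ)) := by
    intro u v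
    have := Integrable.const_inner (𝕜 := ℝ) u (hintv v)
    apply this.congr
    filter_upwards [ae_restrict_mem measurableSet_Ioi] with s _
    simp only [hf_def, ContinuousLinearMap.comp_apply]
    rw [ContinuousLinearMap.adjoint_inner_right]
  constructor
  · -- symmetry
    intro u v
    have e1 := real_inner_comm (P u) v
    rw [← e1, hkey v u, hkey u v]
    apply setIntegral_congr_fun measurableSet_Ioi
    intro s _
    show (inner ℝ (M s v) (Q (M s u)) : ℝ) = (inner ℝ (M s u) (Q (M s v)) : ℝ)
    rw [real_inner_comm]
    exact hQsym _ _
  constructor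
  · -- lower bound
    intro v
    rw [hkey v v]
    have hgron := aux_gronwall_low μ A M hAb hM0 hM v
    have hlowint : IntegrableOn (fun s => qlo * ‖v‖^2 * Real.exp (-(2*μ) * s))
        (Set.Ioi (0:ℝ)) := (exp_neg_integrableOn_Ioi 0 (by positivity)).const_mul _
    have hle : ∫ s in Set.Ioi (0:ℝ), qlo * ‖v‖^2 * Real.exp (-(2*μ) * s)
        ≤ ∫ s in Set.Ioi (0:ℝ), (inner ℝ (M s v) (Q (M s v)) : ℝ) := by
      apply setIntegral_mono_on hlowint (hφint v v) measurableSet_Ioi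
      intro s hs
      have h1 := hgron s (le_of_lt hs)
      have h2 := hQlow (M s v)
      nlinarith [Real.exp_pos (-(2*μ) * s), mul_le_mul_of_nonneg_left h1 hqlo.le]
    have hval : ∫ s in Set.Ioi (0:ℝ), qlo * ‖v‖^2 * Real.exp (-(2*μ) * s)
        = qlo / (2*μ) * ‖v‖^2 := by
      rw [MeasureTheory.integral_const_mul, aux_exp_int (by positivity : (0:ℝ) < 2*μ)]
      ring
    linarith [hle, hval.symm.le]
  · -- upper bound
    intro v
    rw [hkey v v]
    by_cases hv : v = 0
    · simp [hv]
    have hvn : 0 < ‖v‖ := norm_pos_iff.2 hv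
    have hqhi : 0 < qhi := by
      have h1 := hQlow v
      have h2 := hQhigh v
      nlinarith [pow_pos hvn 2]
    have hupint : IntegrableOn (fun s => qhi * k^2 * ‖v‖^2 * Real.exp (-(2*lam) * s))
        (Set.Ioi (0:ℝ)) := hgint.const_mul _
    have hle : ∫ s in Set.Ioi (0:ℝ), (inner ℝ (M s v) (Q (M s v)) : ℝ)
        ≤ ∫ s in Set.Ioi (0:ℝ), qhi * k^2 * ‖v‖^2 * Real.exp (-(2*lam) * s) := by
      apply setIntegral_mono_on (hφint v v) hupint measurableSet_Ioi
      intro s hs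
      have hs0 : (0:ℝ) ≤ s := le_of_lt hs
      have h2 := hQhigh (M s v)
      have hMv : ‖M s v‖ ≤ k * Real.exp (-lam * s) * ‖v‖ := by
        calc ‖M s v‖ ≤ ‖M s‖ * ‖v‖ := (M s).le_opNorm v
          _ ≤ k * Real.exp (-lam * s) * ‖v‖ :=
            mul_le_mul_of_nonneg_right (hMb s hs0) (norm_nonneg v)
      have hsq : ‖M s v‖^2 ≤ k^2 * Real.exp (-(2*lam) * s) * ‖v‖^2 := by
        have hexp : Real.exp (-lam * s) * Real.exp (-lam * s) = Real.exp (-(2*lam) * s) := by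
          rw [← Real.exp_add]; ring_nf
        have h3 := mul_self_le_mul_self (norm_nonneg (M s v)) hMv
        have h4 : (k * Real.exp (-lam*s) * ‖v‖) * (k * Real.exp (-lam*s) * ‖v‖)
            = k^2 * Real.exp (-(2*lam)*s) * ‖v‖^2 := by rw [← hexp]; ring
        nlinarith [h3, h4]
      calc (inner ℝ (M s v) (Q (M s v)) : ℝ) ≤ qhi * ‖M s v‖^2 := h2
        _ ≤ qhi * (k^2 * Real.exp (-(2*lam) * s) * ‖v‖^2) :=
            mul_le_mul_of_nonneg_left hsq hqhi.le
        _ = qhi * k^2 * ‖v‖^2 * Real.exp (-(2*lam) * s) := by ring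
    have hval : ∫ s in Set.Ioi (0:ℝ), qhi * k^2 * ‖v‖^2 * Real.exp (-(2*lam) * s)
        = k^2 * qhi / (2*lam) * ‖v‖^2 := by
      rw [MeasureTheory.integral_const_mul, aux_exp_int (by positivity : (0:ℝ) < 2*lam)]
      ring
    linarith [hle, hval.le]
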